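/- For every sequence s ∈ Ω₁₆^T with T ≥ 2 and every index i with 1 ≤ i ≤ T − 1, one has ‖s‖² · (1 − |s_i|²/τ_i) ≥ T/5, where τ_i = Σ_{k=i}^T |s_k|². -/
import Mathlib


open Finset

/-- The 16-QAM constellation `{a + b·i : a, b ∈ {−3, −1, 1, 3}}`. -/
def QAM16 : Set ℂ :=
  {z : ℂ | ∃ a ∈ ({-3, -1, 1, 3} : Set ℝ), ∃ b ∈ ({-3, -1, 1, 3} : Set ℝ),
    z = (a : ℂ) + (b : ℂ) * Complex.I}

lemma QAM16_normSq_bounds {z : ℂ} (hz : z ∈ QAM16) :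
    2 ≤ Complex.normSq z ∧ Complex.normSq z ≤ 18 := by
  obtain ⟨a, ha, b, hb, rfl⟩ := hz
  have h : Complex.normSq ((a : ℂ) + (b : ℂ) * Complex.I) = a ^ 2 + b ^ 2 := by
    simp [Complex.normSq_apply, Complex.add_re, Complex.add_im, Complex.mul_re,
      Complex.mul_im, Complex.I_re, Complex.I_im]
    ring
  rw [h]
  simp only [Set.mem_insert_iff, Set.mem_singleton_iff] at ha hb
  rcases ha with rfl | rfl | rfl | rfl <;> rcases hb with rfl | rfl | rfl | rfl <;> norm_num

/-- **Key estimate in the proof of Lemma 4 of the paper.**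
For every 16-QAM sequence `s ∈ Ω₁₆^T` with `T ≥ 2` and every index `1 ≤ i ≤ T − 1`
(`0`-based: `(i : ℕ) + 1 < T`), one has `‖s‖² (1 − |s_i|²/τ_i) ≥ T/5`, where
`τ_i = ∑_{k ≥ i} |s_k|²`. -/
theorem QAM16_diag_lower_bound (T : ℕ) (hT : 2 ≤ T)
    (s : Fin T → ℂ) (hs : ∀ k, s k ∈ QAM16)
    (i : Fin T) (hi : (i : ℕ) + 1 < T) :
    (∑ k : Fin T, Complex.normSq (s k)) *
      (1 - Complex.normSq (s i) / (∑ k ∈ Finset.Ici i, Complex.normSq (s k))) ≥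
    (T : ℝ) / 5 := by
  set f : Fin T → ℝ := fun k => Complex.normSq (s k) with hf
  have hlb : ∀ k, 2 ≤ f k := fun k => (QAM16_normSq_bounds (hs k)).1
  have hub : ∀ k, f k ≤ 18 := fun k => (QAM16_normSq_bounds (hs k)).2
  have hnn : ∀ k, 0 ≤ f k := fun k => le_trans (by norm_num) (hlb k)
  -- total sum bound
  have hS : (2 : ℝ) * T ≤ ∑ k : Fin T, f k := by
    have := Finset.sum_le_sum (fun k (_ : k ∈ Finset.univ) => hlb k)
    simpa [mul_comm] using this
  -- split tail sum
  set R : ℝ := ∑ k ∈ Finset.Ioi i, f k with hR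
  have hsplit : ∑ k ∈ Finset.Ici i, f k = f i + R := by
    rw [← Finset.sum_insert (by simp : i ∉ Finset.Ioi i)]
    congr 1
    ext x
    simp [Finset.mem_Ioi, Finset.mem_Ici, le_iff_lt_or_eq, eq_comm, or_comm]
  -- R ≥ 2 since i+1 is a valid index greater than i
  have hj : (⟨(i : ℕ) + 1, hi⟩ : Fin T) ∈ Finset.Ioi i := by
    simp [Finset.mem_Ioi, Fin.lt_def]
  have hR2 : (2 : ℝ) ≤ R := by
    calc (2 : ℝ) ≤ f ⟨(i : ℕ) + 1, hi⟩ := hlb _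
    _ ≤ R := Finset.single_le_sum (fun k _ => hnn k) hj
  have hτpos : 0 < f i + R := by
    have := hlb i; linarith
  have hSnn : (0:ℝ) ≤ ∑ k : Fin T, f k := Finset.sum_nonneg fun k _ => hnn k
  have hfrac : (1 : ℝ) / 10 ≤ 1 - f i / (f i + R) := by
    have h1 : f i / (f i + R) ≤ 9 / 10 := by
      rw [div_le_iff₀ hτpos]
      have := hub i
      linarith
    linarith
  rw [hsplit]
  calc (T : ℝ) / 5 = (2 * T) * (1 / 10) := by ring
  _ ≤ (∑ k : Fin T, f k) * (1 - f i / (f i + R)) := by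
      apply mul_le_mul hS hfrac (by norm_num) hSnn
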